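/- Let N be an odd perfect number written in Euler form N = p^α · q_1^{2β_1} · … · q_{r-1}^{2β_{r-1}}, let ℓ be a prime and k a positive integer with k ≠ 2. If ℓ^k divides 2β_i + 1 for every i = 1, …, r−1 but ℓ^{5k} does not divide N, then ℓ ≠ p. -/

import Mathlib

open Finset

private lemma opn_geom (x : ℕ) (hx : 1 ≤ x) : ∀ m : ℕ,
    (x - 1) * ∑ j ∈ Finset.range m, x ^ j = x ^ m - 1 := by
  intro m
  induction m with
  | zero => simp
  | succ m ih =>
    rw [Finset.sum_range_succ, Nat.mul_add, ih]
    have h1 : 1 ≤ x ^ m := Nat.one_le_pow _ _ hx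
    have h2 : x ^ m ≤ x ^ (m + 1) := Nat.pow_le_pow_right hx (by omega)
    have h3 : (x - 1) * x ^ m = x ^ (m + 1) - x ^ m := by
      have h4 : (x - 1) * x ^ m = x * x ^ m - 1 * x ^ m := Nat.sub_mul x 1 (x ^ m)
      have h5 : x ^ (m + 1) = x * x ^ m := by rw [pow_succ, mul_comm]
      omega
    omega

private lemma opn_pow_sub_one_dvd {x a b : ℕ} (h : a ∣ b) : x ^ a - 1 ∣ x ^ b - 1 := by
  obtain ⟨c, rfl⟩ := h
  have := Nat.sub_dvd_pow_sub_pow (x ^ a) 1 c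
  simpa [← pow_mul] using this

private lemma opn_le_padic {p n k : ℕ} (hp : p.Prime) (hn : n ≠ 0) (h : p ^ k ∣ n) :
    k ≤ padicValNat p n := by
  rw [← Nat.factorization_def n hp]
  exact (hp.pow_dvd_iff_le_factorization hn).mp h

private lemma opn_padic_pow_dvd {p n : ℕ} (hp : p.Prime) (hn : n ≠ 0) :
    p ^ padicValNat p n ∣ n := pow_padicValNat_dvd

private lemma opn_padic_prod {p : ℕ} [Fact p.Prime] {ι : Type*} (s : Finset ι) (f : ι → ℕ)
    (hf : ∀ i ∈ s, f i ≠ 0) :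
    padicValNat p (∏ i ∈ s, f i) = ∑ i ∈ s, padicValNat p (f i) := by
  classical
  induction s using Finset.induction_on with
  | empty => simp
  | insert a t hni ih =>
    rw [Finset.prod_insert hni, Finset.sum_insert hni,
      padicValNat.mul (hf a (Finset.mem_insert_self a t))
        (Finset.prod_ne_zero_iff.mpr fun i hi => hf i (Finset.mem_insert_of_mem hi)),
      ih fun i hi => hf i (Finset.mem_insert_of_mem hi)]

-- σ₁(r^e) identity
private lemma opn_sigma_eq (r e : ℕ) (hr : r.Prime) :
    ArithmeticFunction.sigma 1 (r ^ e) = ∑ j ∈ Finset.range (e + 1), r ^ j :=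
  ArithmeticFunction.sigma_one_apply_prime_pow hr

private lemma opn_sigma_pos (r e : ℕ) (hr : r.Prime) :
    0 < ArithmeticFunction.sigma 1 (r ^ e) := by
  rw [opn_sigma_eq r e hr]
  exact Finset.sum_pos (fun j _ => pow_pos hr.pos j) (by simp)

private lemma opn_sigma_id (r e : ℕ) (hr : r.Prime) :
    (r - 1) * ArithmeticFunction.sigma 1 (r ^ e) = r ^ (e + 1) - 1 := by
  rw [opn_sigma_eq r e hr]
  exact opn_geom r hr.one_lt.le (e + 1)

private lemma opn_not_dvd_sigma_self (r e : ℕ) (hr : r.Prime) :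
    ¬ r ∣ ArithmeticFunction.sigma 1 (r ^ e) := by
  rw [opn_sigma_eq r e hr, Finset.sum_range_succ']
  intro h
  have h2 : r ∣ ∑ j ∈ Finset.range e, r ^ (j + 1) :=
    Finset.dvd_sum fun j _ => dvd_pow_self r (Nat.succ_ne_zero j)
  have h3 : r ∣ r ^ 0 := (Nat.dvd_add_right h2).mp h
  rw [pow_zero, Nat.dvd_one] at h3
  exact hr.ne_one h3

-- cast helper
private lemma opn_dvd_iff {r a M : ℕ} (ha : 1 ≤ a) :
    r ∣ a ^ M - 1 ↔ (a : ZMod r) ^ M = 1 := by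
  rw [← ZMod.natCast_eq_zero_iff, Nat.cast_sub (Nat.one_le_pow _ _ ha),
    Nat.cast_pow, Nat.cast_one, sub_eq_zero]

private lemma opn_dvd_iff' {r a : ℕ} (ha : 1 ≤ a) :
    r ∣ a - 1 ↔ (a : ZMod r) = 1 := by
  rw [← ZMod.natCast_eq_zero_iff, Nat.cast_sub ha, Nat.cast_one, sub_eq_zero]
private lemma opn_ord {ℓ q M : ℕ} (hℓ : ℓ.Prime) (hℓq : ¬ ℓ ∣ q) (hq1 : 1 ≤ q)
    (h : ℓ ∣ q ^ M - 1) :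
    ∃ d : ℕ, d ≠ 0 ∧ d ∣ M ∧ d ∣ ℓ - 1 ∧ ℓ ∣ q ^ d - 1 := by
  haveI : Fact ℓ.Prime := ⟨hℓ⟩
  have hu : (q : ZMod ℓ) ≠ 0 := by
    rw [Ne, ZMod.natCast_eq_zero_iff]; exact hℓq
  have h1 : (q : ZMod ℓ) ^ M = 1 := (opn_dvd_iff hq1).mp h
  have hdM : orderOf (q : ZMod ℓ) ∣ M := orderOf_dvd_of_pow_eq_one h1
  have hdl : orderOf (q : ZMod ℓ) ∣ ℓ - 1 :=
    orderOf_dvd_of_pow_eq_one (ZMod.pow_card_sub_one_eq_one hu)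
  have hℓ2 := hℓ.two_le
  have hd0 : orderOf (q : ZMod ℓ) ≠ 0 := by
    intro h0
    rw [h0] at hdl
    have := Nat.eq_zero_of_zero_dvd hdl
    omega
  exact ⟨orderOf (q : ZMod ℓ), hd0, hdM, hdl, (opn_dvd_iff hq1).mpr (pow_orderOf_eq_one _)⟩

private lemma opn_ord_exact {ℓ r x : ℕ} (j : ℕ) (hr : r.Prime) (hℓ : ℓ.Prime)
    (hrx : ¬ r ∣ x) (hx1 : 1 ≤ x)
    (h1 : r ∣ x ^ (ℓ ^ (j + 1)) - 1) (h2 : ¬ r ∣ x ^ (ℓ ^ j) - 1) :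
    ℓ ^ (j + 1) ∣ r - 1 := by
  haveI : Fact r.Prime := ⟨hr⟩
  have hu : (x : ZMod r) ≠ 0 := by
    rw [Ne, ZMod.natCast_eq_zero_iff]; exact hrx
  have e1 : (x : ZMod r) ^ (ℓ ^ (j + 1)) = 1 := (opn_dvd_iff hx1).mp h1
  have e2 : ¬ (x : ZMod r) ^ (ℓ ^ j) = 1 := fun hc => h2 ((opn_dvd_iff hx1).mpr hc)
  have hdvd : orderOf (x : ZMod r) ∣ ℓ ^ (j + 1) := orderOf_dvd_of_pow_eq_one e1
  obtain ⟨c, hc, hdc⟩ := (Nat.dvd_prime_pow hℓ).mp hdvd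
  have hcj : ¬ c ≤ j := by
    intro hcj
    exact e2 (orderOf_dvd_iff_pow_eq_one.mp (hdc ▸ pow_dvd_pow ℓ hcj))
  have hceq : c = j + 1 := by omega
  have hford : orderOf (x : ZMod r) ∣ r - 1 :=
    orderOf_dvd_of_pow_eq_one (ZMod.pow_card_sub_one_eq_one hu)
  rw [hdc, hceq] at hford
  exact hford

private lemma opn_val_sigma_S {l q e : ℕ} (hl : l.Prime) (hlodd : Odd l) (hq : q.Prime)
    (hql : q ≠ l) (hd : l ∣ q - 1) :
    padicValNat l (ArithmeticFunction.sigma 1 (q ^ e)) = padicValNat l (e + 1) := by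
  haveI : Fact l.Prime := ⟨hl⟩
  have hlq : ¬ l ∣ q := fun h => hql ((Nat.prime_dvd_prime_iff_eq hl hq).mp h).symm
  have hid := opn_sigma_id q e hq
  have hLTE : padicValNat l (q ^ (e + 1) - 1 ^ (e + 1)) =
      padicValNat l (q - 1) + padicValNat l (e + 1) :=
    padicValNat.pow_sub_pow hlodd hq.one_lt (by simpa using hd) hlq (Nat.succ_ne_zero e)
  rw [one_pow] at hLTE
  have hq1 : q - 1 ≠ 0 := by have := hq.two_le; omega
  have hσ : ArithmeticFunction.sigma 1 (q ^ e) ≠ 0 := (opn_sigma_pos q e hq).ne'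
  have hmul : padicValNat l ((q - 1) * ArithmeticFunction.sigma 1 (q ^ e)) =
      padicValNat l (q - 1) + padicValNat l (ArithmeticFunction.sigma 1 (q ^ e)) :=
    padicValNat.mul hq1 hσ
  rw [hid] at hmul
  omega

private lemma opn_val_sigma_NS {l q e k : ℕ} (hl : l.Prime) (hlodd : Odd l) (hq : q.Prime)
    (hql : q ≠ l) (hnd : ¬ l ∣ q - 1) (hdvd : l ^ k ∣ e + 1)
    (hpos : padicValNat l (ArithmeticFunction.sigma 1 (q ^ e)) ≠ 0) :
    k + 1 ≤ padicValNat l (ArithmeticFunction.sigma 1 (q ^ e)) := by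
  haveI : Fact l.Prime := ⟨hl⟩
  have hlq : ¬ l ∣ q := fun h => hql ((Nat.prime_dvd_prime_iff_eq hl hq).mp h).symm
  have hσ : ArithmeticFunction.sigma 1 (q ^ e) ≠ 0 := (opn_sigma_pos q e hq).ne'
  have hlσ : l ∣ ArithmeticFunction.sigma 1 (q ^ e) := by
    by_contra hc
    exact hpos (padicValNat.eq_zero_of_not_dvd hc)
  have hid := opn_sigma_id q e hq
  have hlpow : l ∣ q ^ (e + 1) - 1 := by
    rw [← hid]
    exact Dvd.dvd.mul_left hlσ (q - 1)
  obtain ⟨d, hd0, hdM, hdl, hldq⟩ := opn_ord hl hlq hq.one_lt.le hlpow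
  obtain ⟨c, hc⟩ := hdM
  have hc0 : c ≠ 0 := by
    intro h0
    rw [h0, Nat.mul_zero] at hc
    omega
  have hld : ¬ l ∣ d := by
    intro h
    have h2 : l ∣ l - 1 := h.trans hdl
    have h3 := Nat.le_of_dvd (by have := hl.two_le; omega) h2
    have := hl.two_le
    omega
  have hcop : Nat.Coprime (l ^ k) d := Nat.Coprime.pow_left k ((hl.coprime_iff_not_dvd).mpr hld)
  have hkc : l ^ k ∣ c := hcop.dvd_of_dvd_mul_right (by rw [mul_comm c d, ← hc]; exact hdvd)
  have hvq : 1 ≤ padicValNat l (q ^ d - 1) := by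
    apply opn_le_padic hl _ (by simpa using hldq)
    have h2 : 2 ≤ q ^ d := by
      calc 2 ≤ q := hq.two_le
      _ = q ^ 1 := (pow_one q).symm
      _ ≤ q ^ d := Nat.pow_le_pow_right hq.pos (by omega)
    omega
  have hvc : k ≤ padicValNat l c := opn_le_padic hl hc0 hkc
  have hqd1 : (1:ℕ) < q ^ d := by
    calc 1 < q := hq.one_lt
    _ = q ^ 1 := (pow_one q).symm
    _ ≤ q ^ d := Nat.pow_le_pow_right hq.pos (by omega)
  have hlqd : ¬ l ∣ q ^ d := fun h => hlq (hl.dvd_of_dvd_pow h)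
  have hLTE : padicValNat l ((q ^ d) ^ c - 1 ^ c) =
      padicValNat l (q ^ d - 1) + padicValNat l c :=
    padicValNat.pow_sub_pow hlodd hqd1 (by simpa using hldq) hlqd hc0
  rw [one_pow, ← pow_mul, ← hc] at hLTE
  have hvq1 : padicValNat l (q - 1) = 0 := padicValNat.eq_zero_of_not_dvd hnd
  have hq1 : q - 1 ≠ 0 := by have := hq.two_le; omega
  have hmul : padicValNat l ((q - 1) * ArithmeticFunction.sigma 1 (q ^ e)) =
      padicValNat l (q - 1) + padicValNat l (ArithmeticFunction.sigma 1 (q ^ e)) :=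
    padicValNat.mul hq1 hσ
  rw [hid] at hmul
  omega
private lemma opn_sum_gt {l x : ℕ} (hl : 2 ≤ l) (hx : 2 ≤ x) :
    l < ∑ r ∈ Finset.range l, x ^ r := by
  obtain ⟨l', hl'⟩ : ∃ l', l = l' + 1 := ⟨l - 1, by omega⟩
  subst hl'
  rw [Finset.sum_range_succ']
  have hterm : ∀ r ∈ Finset.range l', 2 ≤ x ^ (r + 1) :=
    fun r _ => le_trans hx (Nat.le_self_pow (Nat.succ_ne_zero r) _)
  have hsum : 2 * l' ≤ ∑ r ∈ Finset.range l', x ^ (r + 1) := by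
    calc 2 * l' = ∑ _r ∈ Finset.range l', 2 := by
          rw [Finset.sum_const, Finset.card_range]; ring
    _ ≤ _ := Finset.sum_le_sum hterm
  simp only [pow_zero]
  omega

private lemma opn_sum_odd {l x : ℕ} (hlodd : Odd l) (hxodd : Odd x) :
    ¬ 2 ∣ ∑ r ∈ Finset.range l, x ^ r := by
  have hmod : (∑ r ∈ Finset.range l, x ^ r) % 2 = 1 := by
    rw [Finset.sum_nat_mod]
    have : ∀ r ∈ Finset.range l, x ^ r % 2 = 1 := fun r _ => Nat.odd_iff.mp (hxodd.pow)
    rw [Finset.sum_congr rfl this, Finset.sum_const, Finset.card_range, smul_eq_mul, mul_one]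
    exact Nat.odd_iff.mp hlodd
  omega

private lemma opn_exists_prime {l E : ℕ} (hl : l.Prime) (hlt : l < E)
    (hv : padicValNat l E ≤ 1) :
    ∃ r : ℕ, r.Prime ∧ r ∣ E ∧ r ≠ l := by
  haveI : Fact l.Prime := ⟨hl⟩
  have hE0 : E ≠ 0 := by omega
  obtain ⟨v, hvdef⟩ : ∃ v, padicValNat l E = v := ⟨_, rfl⟩
  rw [hvdef] at hv
  have hpd : l ^ v ∣ E := hvdef ▸ pow_padicValNat_dvd
  obtain ⟨E', hE'⟩ := hpd
  have hE'0 : E' ≠ 0 := by rintro rfl; rw [mul_zero] at hE'; exact hE0 hE'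
  have hlE' : ¬ l ∣ E' := by
    intro h
    obtain ⟨c, rfl⟩ := h
    have hstep : l ^ (v + 1) ∣ E := ⟨c, by rw [hE']; ring⟩
    have h2 := opn_le_padic hl hE0 hstep
    rw [hvdef] at h2
    omega
  have hE'1 : E' ≠ 1 := by
    intro h1
    rw [h1, mul_one] at hE'
    have hle : E ≤ l := by
      rw [hE']
      calc l ^ v ≤ l ^ 1 := Nat.pow_le_pow_right hl.pos hv
      _ = l := pow_one l
    omega
  exact ⟨E'.minFac, Nat.minFac_prime hE'1,
    (Nat.minFac_dvd E').trans ⟨l ^ v, by rw [hE']; ring⟩,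
    fun h => hlE' (h ▸ Nat.minFac_dvd E')⟩
theorem ell_ne_p_of_k_ne_two
    (N p α s : ℕ) (q β : Fin s → ℕ)
    (hN : N = p ^ α * ∏ i, q i ^ (2 * β i))
    (hodd : Odd N)
    (hperf : ArithmeticFunction.sigma 1 N = 2 * N)
    (hp : p.Prime) (hpodd : Odd p)
    (hq : ∀ i, (q i).Prime) (hqodd : ∀ i, Odd (q i))
    (hinj : Function.Injective q)
    (hpq : ∀ i, p ≠ q i)
    (hα4 : α % 4 = 1) (hp4 : p % 4 = 1)
    (hαpos : 0 < α) (hβpos : ∀ i, 0 < β i)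
    (ℓ k : ℕ) (hℓ : ℓ.Prime) (hkpos : 0 < k) (hk2 : k ≠ 2)
    (hdvd : ∀ i, ℓ ^ k ∣ 2 * β i + 1)
    (hnd : ¬ ℓ ^ (5 * k) ∣ N) :
    ℓ ≠ p := by
  intro hlp
  subst hlp
  clear hℓ
  haveI factl : Fact ℓ.Prime := ⟨hp⟩
  have hl2 : ℓ ≠ 2 := by intro h; rw [h] at hp4; omega
  have hlodd : Odd ℓ := hpodd
  have hXne : ∀ i : Fin s, q i ^ (2 * β i) ≠ 0 := fun i => pow_ne_zero _ (hq i).pos.ne'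
  have hσne : ∀ i : Fin s, ArithmeticFunction.sigma 1 (q i ^ (2 * β i)) ≠ 0 :=
    fun i => (opn_sigma_pos _ _ (hq i)).ne'
  have hlqi : ∀ i, ¬ ℓ ∣ q i :=
    fun i h => (hpq i) ((Nat.prime_dvd_prime_iff_eq hp (hq i)).mp h)
  have hprodne : (∏ i, q i ^ (2 * β i)) ≠ 0 := Finset.prod_ne_zero_iff.mpr fun i _ => hXne i
  have hNne : N ≠ 0 := by
    rw [hN]; exact Nat.mul_ne_zero (pow_ne_zero _ hp.pos.ne') hprodne
  have hcop1 : Nat.Coprime ℓ (∏ i, q i ^ (2 * β i)) :=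
    Nat.Coprime.prod_right fun i _ =>
      Nat.Coprime.pow_right _ ((Nat.coprime_primes hp (hq i)).mpr (hpq i))
  have hcop : Nat.Coprime (ℓ ^ α) (∏ i, q i ^ (2 * β i)) := Nat.Coprime.pow_left _ hcop1
  have hpair : ((Finset.univ : Finset (Fin s)) : Set (Fin s)).Pairwise
      (Function.onFun Nat.Coprime fun i => q i ^ (2 * β i)) := by
    intro i _ j _ hij
    exact Nat.Coprime.pow _ _
      ((Nat.coprime_primes (hq i) (hq j)).mpr (fun h => hij (hinj h)))
  have hsplit : ArithmeticFunction.sigma 1 N =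
      ArithmeticFunction.sigma 1 (ℓ ^ α) * ∏ i, ArithmeticFunction.sigma 1 (q i ^ (2 * β i)) := by
    rw [hN, ArithmeticFunction.isMultiplicative_sigma.map_mul_of_coprime hcop,
      ArithmeticFunction.IsMultiplicative.map_prod _ ArithmeticFunction.isMultiplicative_sigma _
        hpair]
  have hvN : padicValNat ℓ N = α := by
    rw [hN, padicValNat.mul (pow_ne_zero _ hp.pos.ne') hprodne, padicValNat.prime_pow,
      padicValNat.eq_zero_of_not_dvd (hp.coprime_iff_not_dvd.mp hcop1),
      add_zero]
  have hv2N : padicValNat ℓ (2 * N) = α := by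
    rw [padicValNat.mul two_ne_zero hNne, hvN,
      padicValNat.eq_zero_of_not_dvd
        (fun h => hl2 ((Nat.prime_dvd_prime_iff_eq hp Nat.prime_two).mp h)), zero_add]
  have hαsum : α = ∑ i, padicValNat ℓ (ArithmeticFunction.sigma 1 (q i ^ (2 * β i))) := by
    have h1 : padicValNat ℓ (ArithmeticFunction.sigma 1 N) =
        ∑ i, padicValNat ℓ (ArithmeticFunction.sigma 1 (q i ^ (2 * β i))) := by
      rw [hsplit,
        padicValNat.mul (opn_sigma_pos ℓ α hp).ne'
          (Finset.prod_ne_zero_iff.mpr fun i _ => hσne i),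
        padicValNat.eq_zero_of_not_dvd (opn_not_dvd_sigma_self ℓ α hp), zero_add,
        opn_padic_prod _ _ (fun i _ => hσne i)]
    rw [hperf] at h1
    omega
  have hαlt : α < 5 * k := by
    by_contra hcon
    push_neg at hcon
    exact hnd ((pow_dvd_pow ℓ hcon).trans (hN ▸ Dvd.intro _ rfl))
  
  have partner : ∀ (i : Fin s) (j : ℕ), ℓ ^ (j + 1) ∣ 2 * β i + 1 →
      ∃ m : Fin s, m ≠ i ∧ ℓ ∣ q m - 1 ∧ q m ∣ q i ^ ℓ ^ (j + 1) - 1 ∧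
        ¬ q m ∣ q i ^ ℓ ^ j - 1 := by
    intro i j hj
    have hq2 : 2 ≤ q i := (hq i).two_le
    have hl1 := hp.two_le
    have hx2 : 2 ≤ q i ^ ℓ ^ j := by
      calc 2 ≤ q i := hq2
      _ = q i ^ 1 := (pow_one _).symm
      _ ≤ q i ^ ℓ ^ j := Nat.pow_le_pow_right (hq i).pos (Nat.one_le_pow _ _ hp.pos)
    have hE : (q i ^ ℓ ^ j - 1) * ∑ r ∈ Finset.range ℓ, (q i ^ ℓ ^ j) ^ r =
        (q i ^ ℓ ^ j) ^ ℓ - 1 := opn_geom _ (by omega) ℓ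
    have hxl : (q i ^ ℓ ^ j) ^ ℓ = q i ^ ℓ ^ (j + 1) := by
      rw [← pow_mul, ← pow_succ]
    have hσid := opn_sigma_id (q i) (2 * β i) (hq i)
    have hdvd1 : q i ^ ℓ ^ (j + 1) - 1 ∣ q i ^ (2 * β i + 1) - 1 := opn_pow_sub_one_dvd hj
    have hdvd2 : q i - 1 ∣ q i ^ ℓ ^ j - 1 := by
      simpa using opn_pow_sub_one_dvd (x := q i) (one_dvd (ℓ ^ j))
    have hEσ : (∑ r ∈ Finset.range ℓ, (q i ^ ℓ ^ j) ^ r) ∣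
        ArithmeticFunction.sigma 1 (q i ^ (2 * β i)) := by
      obtain ⟨D, hD⟩ := hdvd2
      have h1 : (q i ^ ℓ ^ j - 1) * ∑ r ∈ Finset.range ℓ, (q i ^ ℓ ^ j) ^ r ∣
          (q i - 1) * ArithmeticFunction.sigma 1 (q i ^ (2 * β i)) := by
        rw [hσid, hE, hxl]; exact hdvd1
      rw [hD, mul_assoc] at h1
      have h2 : (D * ∑ r ∈ Finset.range ℓ, (q i ^ ℓ ^ j) ^ r) ∣
          ArithmeticFunction.sigma 1 (q i ^ (2 * β i)) :=
        (mul_dvd_mul_iff_left (show (q i - 1 : ℕ) ≠ 0 by omega)).mp h1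
      exact (dvd_mul_left _ D).trans h2
    have hEgt : ℓ < ∑ r ∈ Finset.range ℓ, (q i ^ ℓ ^ j) ^ r := opn_sum_gt hl1 hx2
    have hE0 : (∑ r ∈ Finset.range ℓ, (q i ^ ℓ ^ j) ^ r) ≠ 0 := by omega
    have hEodd : ¬ 2 ∣ ∑ r ∈ Finset.range ℓ, (q i ^ ℓ ^ j) ^ r :=
      opn_sum_odd hlodd ((hqodd i).pow)
    have hvE : padicValNat ℓ (∑ r ∈ Finset.range ℓ, (q i ^ ℓ ^ j) ^ r) ≤ 1 := by
      by_cases hdq : ℓ ∣ q i - 1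
      · have hlx1 : ℓ ∣ q i ^ ℓ ^ j - 1 := hdq.trans hdvd2
        have hLTE : padicValNat ℓ ((q i ^ ℓ ^ j) ^ ℓ - 1 ^ ℓ) =
            padicValNat ℓ (q i ^ ℓ ^ j - 1) + padicValNat ℓ ℓ :=
          padicValNat.pow_sub_pow hlodd (by omega) (by simpa using hlx1)
            (fun h => hlqi i (hp.dvd_of_dvd_pow h)) hp.pos.ne'
        rw [one_pow] at hLTE
        have hvll : padicValNat ℓ ℓ = 1 := padicValNat.self hp.one_lt
        have hmul : padicValNat ℓ ((q i ^ ℓ ^ j - 1) * ∑ r ∈ Finset.range ℓ, (q i ^ ℓ ^ j) ^ r) =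
            padicValNat ℓ (q i ^ ℓ ^ j - 1) +
              padicValNat ℓ (∑ r ∈ Finset.range ℓ, (q i ^ ℓ ^ j) ^ r) :=
          padicValNat.mul (by omega) hE0
        rw [hE] at hmul
        omega
      · have hnodvd : ¬ ℓ ∣ ∑ r ∈ Finset.range ℓ, (q i ^ ℓ ^ j) ^ r := by
          intro hlE
          have hlxl : ℓ ∣ q i ^ ℓ ^ (j + 1) - 1 := by
            rw [← hxl, ← hE]; exact hlE.mul_left _
          obtain ⟨d, hd0, hdM, hdl, hldq⟩ := opn_ord hp (hlqi i) (by omega) hlxl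
          obtain ⟨c, hc, hdc⟩ := (Nat.dvd_prime_pow hp).mp hdM
          have hd1 : d = 1 := by
            rcases Nat.eq_zero_or_pos c with h0 | hcpos
            · rw [h0, pow_zero] at hdc; exact hdc
            · exfalso
              have hld : ℓ ∣ d := hdc ▸ dvd_pow_self ℓ hcpos.ne'
              have h2 : ℓ ∣ ℓ - 1 := hld.trans hdl
              have h3 := Nat.le_of_dvd (by omega) h2
              omega
          rw [hd1, pow_one] at hldq
          exact hdq hldq
        rw [padicValNat.eq_zero_of_not_dvd hnodvd]
        omega
    obtain ⟨r0, hr0prime, hr0E, hr0l⟩ := opn_exists_prime hp hEgt hvE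
    have hrσ : r0 ∣ ArithmeticFunction.sigma 1 (q i ^ (2 * β i)) := hr0E.trans hEσ
    have hrσN : r0 ∣ 2 * N := by
      rw [← hperf, hsplit]
      exact Dvd.dvd.mul_left
        (hrσ.trans (Finset.dvd_prod_of_mem
          (fun m => ArithmeticFunction.sigma 1 (q m ^ (2 * β m))) (Finset.mem_univ i))) _
    have hr2 : r0 ≠ 2 := fun h => hEodd (h ▸ hr0E)
    have hrN : r0 ∣ N :=
      Nat.Coprime.dvd_of_dvd_mul_left
        ((Nat.coprime_primes hr0prime Nat.prime_two).mpr hr2) hrσN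
    obtain ⟨m, hm⟩ : ∃ m : Fin s, r0 = q m := by
      rw [hN] at hrN
      rcases (Nat.Prime.dvd_mul hr0prime).mp hrN with h | h
      · exact absurd ((Nat.prime_dvd_prime_iff_eq hr0prime hp).mp
          (hr0prime.dvd_of_dvd_pow h)) hr0l
      · obtain ⟨m, _, hmdvd⟩ := hr0prime.prime.exists_mem_finset_dvd h
        exact ⟨m, (Nat.prime_dvd_prime_iff_eq hr0prime (hq m)).mp
          (hr0prime.dvd_of_dvd_pow hmdvd)⟩
    rw [hm] at hr0E hr0l hr2
    have hdvdBig : q m ∣ q i ^ ℓ ^ (j + 1) - 1 := by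
      rw [← hxl, ← hE]
      exact hr0E.mul_left _
    have hnotsmall : ¬ q m ∣ q i ^ ℓ ^ j - 1 := by
      intro hsm
      have hsum : (q m : ℤ) ∣ ((∑ r ∈ Finset.range ℓ, (q i ^ ℓ ^ j) ^ r : ℕ) : ℤ) - (ℓ : ℤ) := by
        have hrepr : ((∑ r ∈ Finset.range ℓ, (q i ^ ℓ ^ j) ^ r : ℕ) : ℤ) - (ℓ : ℤ) =
            ∑ r ∈ Finset.range ℓ, (((q i : ℤ) ^ ℓ ^ j) ^ r - 1) := by
          rw [Finset.sum_sub_distrib, Finset.sum_const, Finset.card_range]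
          push_cast
          ring
        rw [hrepr]
        apply Finset.dvd_sum
        intro r _
        have h1 : ((q i : ℤ) ^ ℓ ^ j) - 1 ∣ ((q i : ℤ) ^ ℓ ^ j) ^ r - 1 := by
          simpa using sub_dvd_pow_sub_pow ((q i : ℤ) ^ ℓ ^ j) 1 r
        have h2 : (q m : ℤ) ∣ ((q i : ℤ) ^ ℓ ^ j) - 1 := by
          have hcast := Int.natCast_dvd_natCast.mpr hsm
          rwa [Nat.cast_sub (by omega), Nat.cast_one, Nat.cast_pow] at hcast
        exact h2.trans h1
      have hqml : (q m : ℤ) ∣ (ℓ : ℤ) := by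
        have hEdvd : (q m : ℤ) ∣ ((∑ r ∈ Finset.range ℓ, (q i ^ ℓ ^ j) ^ r : ℕ) : ℤ) :=
          Int.natCast_dvd_natCast.mpr hr0E
        have hfin := dvd_sub hEdvd hsum
        simpa using hfin
      have hqmlnat : q m ∣ ℓ := Int.natCast_dvd_natCast.mp hqml
      exact (hpq m) ((Nat.prime_dvd_prime_iff_eq (hq m) hp).mp hqmlnat).symm
    have hmne : m ≠ i := by
      rintro rfl
      have h1 : q m ∣ q m ^ ℓ ^ (j + 1) := dvd_pow_self _ (pow_pos hp.pos _).ne'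
      have h2 := Nat.dvd_sub h1 hdvdBig
      rw [Nat.sub_sub_self (Nat.one_le_pow _ _ (hq m).pos)] at h2
      exact (hq m).ne_one (Nat.dvd_one.mp h2)
    have hqmqi : ¬ q m ∣ q i := by
      intro h
      exact hmne (hinj ((Nat.prime_dvd_prime_iff_eq (hq m) (hq i)).mp h))
    have hlqm : ℓ ∣ q m - 1 := by
      have hexact := opn_ord_exact j (hq m) hp hqmqi (by omega : 1 ≤ q i) hdvdBig hnotsmall
      exact (dvd_pow_self ℓ (Nat.succ_ne_zero j)).trans hexact
    exact ⟨m, hmne, hlqm, hdvdBig, hnotsmall⟩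
    -- abbreviations
  have hn0 : ∀ i : Fin s, (2 * β i + 1) ≠ 0 := fun i => by omega
  have hvnk : ∀ i : Fin s, k ≤ padicValNat ℓ (2 * β i + 1) :=
    fun i => opn_le_padic hp (hn0 i) (hdvd i)
  set S : Finset (Fin s) := Finset.univ.filter (fun m : Fin s => ℓ ∣ q m - 1) with hSdef
  -- counting lemma via distinct partner primes
  have key : ∀ (i : Fin s) (T : ℕ), ℓ ^ T ∣ 2 * β i + 1 → T ≤ (S.erase i).card := by
    intro i T hT
    have hpart : ∀ j : ℕ, ∃ m : Fin s, j < T →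
        m ≠ i ∧ ℓ ∣ q m - 1 ∧ q m ∣ q i ^ ℓ ^ (j + 1) - 1 ∧ ¬ q m ∣ q i ^ ℓ ^ j - 1 := by
      intro j
      by_cases hj : j < T
      · obtain ⟨m, hm⟩ := partner i j ((pow_dvd_pow ℓ (by omega)).trans hT)
        exact ⟨m, fun _ => hm⟩
      · exact ⟨i, fun h => absurd h hj⟩
    choose g hg using hpart
    have hcard : (Finset.range T).card ≤ (S.erase i).card := by
      apply Finset.card_le_card_of_injOn g
      · intro j hj
        rw [Finset.mem_coe, Finset.mem_range] at hj
        obtain ⟨h1, h2, _, _⟩ := hg j hj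
        exact Finset.mem_erase.mpr ⟨h1, Finset.mem_filter.mpr ⟨Finset.mem_univ _, h2⟩⟩
      · intro j hj j' hj' heq
        rw [Finset.mem_coe, Finset.mem_range] at hj hj'
        by_contra hne
        rcases Nat.lt_or_ge j j' with hlt | hge
        · obtain ⟨_, _, hd1, _⟩ := hg j hj
          obtain ⟨_, _, _, hd2⟩ := hg j' hj'
          rw [heq] at hd1
          exact hd2 (hd1.trans (opn_pow_sub_one_dvd (pow_dvd_pow ℓ hlt)))
        · have hlt' : j' < j := by omega
          obtain ⟨_, _, hd1, _⟩ := hg j' hj'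
          obtain ⟨_, _, _, hd2⟩ := hg j hj
          rw [← heq] at hd1
          exact hd2 (hd1.trans (opn_pow_sub_one_dvd (pow_dvd_pow ℓ hlt')))
    simpa using hcard
  -- S has at least k+1 elements
  have hs0 : s ≠ 0 := by
    intro h0
    have : (Finset.univ : Finset (Fin s)) = ∅ := by
      subst h0; exact Finset.univ_eq_empty
    rw [this, Finset.sum_empty] at hαsum
    omega
  have hi₀ : Nonempty (Fin s) := ⟨⟨0, Nat.pos_of_ne_zero hs0⟩⟩
  obtain ⟨i₀⟩ := hi₀
  have hk1 : ℓ ^ ((k - 1) + 1) ∣ 2 * β i₀ + 1 := by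
    have : (k - 1) + 1 = k := by omega
    rw [this]; exact hdvd i₀
  obtain ⟨m₀, _, hm₀dvd, _, _⟩ := partner i₀ (k - 1) hk1
  have hm₀ : m₀ ∈ S := Finset.mem_filter.mpr ⟨Finset.mem_univ _, hm₀dvd⟩
  have hcardpos : 0 < S.card := Finset.card_pos.mpr ⟨m₀, hm₀⟩
  have htSv : ∀ i ∈ S, padicValNat ℓ (ArithmeticFunction.sigma 1 (q i ^ (2 * β i))) =
      padicValNat ℓ (2 * β i + 1) := by
    intro i hi
    exact opn_val_sigma_S hp hlodd (hq i) (Ne.symm (hpq i)) (Finset.mem_filter.mp hi).2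
  have hcardS : k + 1 ≤ S.card := by
    have hV := hvnk m₀
    have h1 := key m₀ (padicValNat ℓ (2 * β m₀ + 1)) pow_padicValNat_dvd
    rw [Finset.card_erase_of_mem hm₀] at h1
    omega
  -- budget
  have hsum_split : (∑ i ∈ S, padicValNat ℓ (ArithmeticFunction.sigma 1 (q i ^ (2 * β i)))) +
      (∑ i ∈ Finset.univ.filter (fun m : Fin s => ¬ ℓ ∣ q m - 1),
        padicValNat ℓ (ArithmeticFunction.sigma 1 (q i ^ (2 * β i)))) = α := by
    rw [hαsum, hSdef]
    exact Finset.sum_filter_add_sum_filter_not Finset.univ _ _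
  have hSsum_ge : k * S.card ≤
      ∑ i ∈ S, padicValNat ℓ (ArithmeticFunction.sigma 1 (q i ^ (2 * β i))) := by
    calc k * S.card = ∑ _i ∈ S, k := by rw [Finset.sum_const, smul_eq_mul, mul_comm]
    _ ≤ _ := Finset.sum_le_sum (fun i hi => by rw [htSv i hi]; exact hvnk i)
  have hαge : k * S.card ≤ α := by omega
  -- case analysis on k
  rcases Nat.lt_or_ge k 4 with hk4 | hk4
  · interval_cases k
    · -- k = 1
      have : 1 * S.card ≤ α := hαge
      omega
    · exact hk2 rfl
    · -- k = 3
      have hc4 : S.card = 4 := by omega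
      have hα13 : α = 13 := by omega
      have ht3 : ∀ i ∈ S, padicValNat ℓ (ArithmeticFunction.sigma 1 (q i ^ (2 * β i))) = 3 := by
        intro i hi
        have h1 := key i (padicValNat ℓ (2 * β i + 1)) pow_padicValNat_dvd
        rw [Finset.card_erase_of_mem hi, hc4] at h1
        have h2 := hvnk i
        rw [htSv i hi]
        omega
      have hSsum : ∑ i ∈ S, padicValNat ℓ (ArithmeticFunction.sigma 1 (q i ^ (2 * β i))) = 12 := by
        rw [Finset.sum_congr rfl ht3, Finset.sum_const, hc4, smul_eq_mul]
      have hrest : ∑ i ∈ Finset.univ.filter (fun m : Fin s => ¬ ℓ ∣ q m - 1),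
          padicValNat ℓ (ArithmeticFunction.sigma 1 (q i ^ (2 * β i))) = 1 := by omega
      have hterm : ∀ i ∈ Finset.univ.filter (fun m : Fin s => ¬ ℓ ∣ q m - 1),
          padicValNat ℓ (ArithmeticFunction.sigma 1 (q i ^ (2 * β i))) = 0 ∨
            4 ≤ padicValNat ℓ (ArithmeticFunction.sigma 1 (q i ^ (2 * β i))) := by
        intro i hi
        rcases Nat.eq_zero_or_pos
          (padicValNat ℓ (ArithmeticFunction.sigma 1 (q i ^ (2 * β i)))) with h0 | hpos
        · exact Or.inl h0
        · right
          exact opn_val_sigma_NS hp hlodd (hq i) (Ne.symm (hpq i))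
            (Finset.mem_filter.mp hi).2 (hdvd i) hpos.ne'
      by_cases hall : ∀ i ∈ Finset.univ.filter (fun m : Fin s => ¬ ℓ ∣ q m - 1),
          padicValNat ℓ (ArithmeticFunction.sigma 1 (q i ^ (2 * β i))) = 0
      · rw [Finset.sum_eq_zero hall] at hrest; omega
      · push_neg at hall
        obtain ⟨i, hiF, hi0⟩ := hall
        have h4 : 4 ≤ padicValNat ℓ (ArithmeticFunction.sigma 1 (q i ^ (2 * β i))) :=
          (hterm i hiF).resolve_left hi0
        have hle : padicValNat ℓ (ArithmeticFunction.sigma 1 (q i ^ (2 * β i))) ≤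
            ∑ m ∈ Finset.univ.filter (fun m : Fin s => ¬ ℓ ∣ q m - 1),
              padicValNat ℓ (ArithmeticFunction.sigma 1 (q m ^ (2 * β m))) :=
          Finset.single_le_sum
            (f := fun m : Fin s => padicValNat ℓ (ArithmeticFunction.sigma 1 (q m ^ (2 * β m))))
            (fun _ _ => Nat.zero_le _) hiF
        omega
  · -- k ≥ 4
    have h5 : 5 ≤ k + 1 := by omega
    have hmul : k * 5 ≤ k * S.card := Nat.mul_le_mul_left k (le_trans h5 hcardS)
    omega
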